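/- Let Γ be a countable discrete group and ρ : Γ → O(H) an orthogonal representation. Then the complexification ρ_ℂ embeds into a countable direct sum of copies of the complex left regular representation λ_Γ if and only if ρ embeds into a countable direct sum of copies of the real left regular representation λ_{Γ,ℝ}. -/

import Mathlib

open scoped ENNReal

section
variable {Γ : Type*} [Group Γ] (𝕜 : Type*) [RCLike 𝕜]

lemma shift_memℓp (g : Γ) (f : lp (fun _ : Γ => 𝕜) 2) :
    Memℓp (fun h => f (g * h)) 2 := by
  have hf := lp.memℓp f
  rw [memℓp_gen_iff (by norm_num)] at hf ⊢
  exact ((Equiv.mulLeft g).summable_iff (f := fun h => ‖f h‖ ^ (2 : ℝ≥0∞).toReal)).2 hf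

variable {𝕜} in
/-- The left translation `(λ(g)ξ)(h) = ξ(g⁻¹h)` on `ℓ²(Γ, 𝕜)`. -/
noncomputable def leftTranslation (g : Γ) :
    lp (fun _ : Γ => 𝕜) 2 ≃ₗᵢ[𝕜] lp (fun _ : Γ => 𝕜) 2 where
  toFun f := ⟨fun h => f (g⁻¹ * h), shift_memℓp 𝕜 g⁻¹ f⟩
  invFun f := ⟨fun h => f (g * h), shift_memℓp 𝕜 g f⟩
  map_add' f₁ f₂ := by ext h; rfl
  map_smul' c f := by ext h; rfl
  left_inv f := by ext h; simp [inv_mul_cancel_left]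
  right_inv f := by ext h; simp [mul_inv_cancel_left]
  norm_map' f := by
    rw [lp.norm_eq_tsum_rpow (by norm_num), lp.norm_eq_tsum_rpow (by norm_num)]
    congr 1
    exact (Equiv.mulLeft g⁻¹).tsum_eq (fun h => ‖f h‖ ^ (2 : ℝ≥0∞).toReal)

/-- The left regular representation of `Γ` on `ℓ²(Γ, 𝕜)`. -/
noncomputable def leftRegularRep :
    Γ →* (lp (fun _ : Γ => 𝕜) 2 ≃ₗᵢ[𝕜] lp (fun _ : Γ => 𝕜) 2) where
  toFun := leftTranslation
  map_one' := by
    apply LinearIsometryEquiv.ext; intro f; ext h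
    show (f : ∀ _ : Γ, 𝕜) ((1 : Γ)⁻¹ * h) = f h
    simp
  map_mul' g₁ g₂ := by
    apply LinearIsometryEquiv.ext; intro f; ext h
    show (f : ∀ _ : Γ, 𝕜) ((g₁ * g₂)⁻¹ * h) = (f : ∀ _ : Γ, 𝕜) (g₂⁻¹ * (g₁⁻¹ * h))
    simp [mul_assoc]

variable {E₁ E₂ : Type*}
  [NormedAddCommGroup E₁] [InnerProductSpace 𝕜 E₁]
  [NormedAddCommGroup E₂] [InnerProductSpace 𝕜 E₂]


/-- `ρ₁ ≪ ρ₂`: `ρ₁` embeds `Γ`-equivariantly and isometrically into the countable direct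
sum `ρ₂^{⊕∞}` acting on `ℓ²(ℕ; E₂)`. -/
def AbsContinuousReps (ρ₁ : Γ →* (E₁ ≃ₗᵢ[𝕜] E₁)) (ρ₂ : Γ →* (E₂ ≃ₗᵢ[𝕜] E₂)) : Prop :=
  ∃ Φ : E₁ →ₗᵢ[𝕜] lp (fun _ : ℕ => E₂) 2,
    ∀ (g : Γ) (v : E₁) (n : ℕ),
      (Φ (ρ₁ g v) : ∀ _ : ℕ, E₂) n = ρ₂ g ((Φ v : ∀ _ : ℕ, E₂) n)

/-! ### Auxiliary material for the main theorem -/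

section AuxGeneral

lemma aux_rpow_two_toReal (x : ℝ) : x ^ (2 : ℝ≥0∞).toReal = x ^ 2 := by
  rw [show ((2:ℝ≥0∞).toReal) = ((2:ℕ):ℝ) by norm_num, Real.rpow_natCast]

lemma aux_memℓp_two_iff {ι : Type*} {E : ι → Type*} [∀ i, NormedAddCommGroup (E i)]
    (f : ∀ i, E i) : Memℓp f 2 ↔ Summable (fun i => ‖f i‖ ^ 2) := by
  rw [memℓp_gen_iff (by norm_num : 0 < (2:ℝ≥0∞).toReal)]
  simp only [aux_rpow_two_toReal]

lemma aux_lp_norm_sq {ι : Type*} {E : ι → Type*} [∀ i, NormedAddCommGroup (E i)]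
    (f : lp E 2) : ‖f‖ ^ 2 = ∑' i, ‖f i‖ ^ 2 := by
  have := lp.norm_rpow_eq_tsum (p := 2) (by norm_num) f
  simpa only [aux_rpow_two_toReal] using this

lemma aux_lp_summable_sq {ι : Type*} {E : ι → Type*} [∀ i, NormedAddCommGroup (E i)]
    (f : lp E 2) : Summable (fun i => ‖f i‖ ^ 2) :=
  (aux_memℓp_two_iff _).1 (lp.memℓp f)

lemma aux_norm_eq_of_sq_eq_sq {a b : ℝ} (ha : 0 ≤ a) (hb : 0 ≤ b) (h : a ^ 2 = b ^ 2) :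
    a = b := by nlinarith

end AuxGeneral

section ReIm

open Complex

variable {X : Type*}

lemma aux_cx_norm_sq_mk (a b : ℝ) : ‖(a:ℂ) + b * I‖ ^ 2 = ‖a‖ ^ 2 + ‖b‖ ^ 2 := by
  rw [Complex.sq_norm, Complex.normSq_apply]
  simp [Real.norm_eq_abs, sq_abs, pow_two]

/-- Combine two real `ℓ²` functions into a complex one. -/
noncomputable def lpMk (a b : lp (fun _ : X => ℝ) 2) : lp (fun _ : X => ℂ) 2 :=
  ⟨fun γ => (a γ : ℂ) + (b γ) * I, by
    refine (aux_memℓp_two_iff _).2 ?_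
    simp only [aux_cx_norm_sq_mk]
    exact ((aux_memℓp_two_iff _).1 (lp.memℓp a)).add ((aux_memℓp_two_iff _).1 (lp.memℓp b))⟩

@[simp] lemma lpMk_apply (a b : lp (fun _ : X => ℝ) 2) (γ : X) :
    (lpMk a b : ∀ _ : X, ℂ) γ = (a γ : ℂ) + (b γ) * I := rfl

/-- Real part of a complex `ℓ²` function. -/
noncomputable def lpRe (f : lp (fun _ : X => ℂ) 2) : lp (fun _ : X => ℝ) 2 :=
  ⟨fun γ => (f γ).re, by
    refine (aux_memℓp_two_iff _).2 ?_
    refine ((aux_memℓp_two_iff _).1 (lp.memℓp f)).of_nonneg_of_le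
      (fun γ => by positivity) (fun γ => ?_)
    have : |(f γ).re| ≤ ‖f γ‖ := Complex.abs_re_le_norm _
    simp only [Real.norm_eq_abs]
    exact pow_le_pow_left₀ (abs_nonneg _) this 2⟩

@[simp] lemma lpRe_apply (f : lp (fun _ : X => ℂ) 2) (γ : X) :
    (lpRe f : ∀ _ : X, ℝ) γ = (f γ).re := rfl

/-- Imaginary part of a complex `ℓ²` function. -/
noncomputable def lpIm (f : lp (fun _ : X => ℂ) 2) : lp (fun _ : X => ℝ) 2 :=
  ⟨fun γ => (f γ).im, by
    refine (aux_memℓp_two_iff _).2 ?_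
    refine ((aux_memℓp_two_iff _).1 (lp.memℓp f)).of_nonneg_of_le
      (fun γ => by positivity) (fun γ => ?_)
    have : |(f γ).im| ≤ ‖f γ‖ := Complex.abs_im_le_norm _
    simp only [Real.norm_eq_abs]
    exact pow_le_pow_left₀ (abs_nonneg _) this 2⟩

@[simp] lemma lpIm_apply (f : lp (fun _ : X => ℂ) 2) (γ : X) :
    (lpIm f : ∀ _ : X, ℝ) γ = (f γ).im := rfl

lemma lpMk_re_im (f : lp (fun _ : X => ℂ) 2) : lpMk (lpRe f) (lpIm f) = f := by
  ext γ; simp [Complex.re_add_im]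

lemma lpMk_norm_sq (a b : lp (fun _ : X => ℝ) 2) :
    ‖lpMk a b‖ ^ 2 = ‖a‖ ^ 2 + ‖b‖ ^ 2 := by
  rw [aux_lp_norm_sq, aux_lp_norm_sq, aux_lp_norm_sq]
  simp only [lpMk_apply, aux_cx_norm_sq_mk]
  exact Summable.tsum_add (aux_lp_summable_sq a) (aux_lp_summable_sq b)

lemma aux_lp_norm_sq_re_im (f : lp (fun _ : X => ℂ) 2) :
    ‖f‖ ^ 2 = ‖lpRe f‖ ^ 2 + ‖lpIm f‖ ^ 2 := by
  conv_lhs => rw [← lpMk_re_im f]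
  exact lpMk_norm_sq _ _

end ReIm

section MkSplit

open Complex

variable {X : Type*}

/-- Combine two sequences of real `ℓ²` functions into a sequence of complex ones. -/
noncomputable def Mk2 (A B : lp (fun _ : ℕ => lp (fun _ : X => ℝ) 2) 2) :
    lp (fun _ : ℕ => lp (fun _ : X => ℂ) 2) 2 :=
  ⟨fun n => lpMk (A n) (B n), by
    refine (aux_memℓp_two_iff _).2 ?_
    simp only [lpMk_norm_sq]
    exact (aux_lp_summable_sq A).add (aux_lp_summable_sq B)⟩

@[simp] lemma Mk2_apply (A B : lp (fun _ : ℕ => lp (fun _ : X => ℝ) 2) 2) (n : ℕ) :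
    (Mk2 A B : ∀ _ : ℕ, lp (fun _ : X => ℂ) 2) n = lpMk (A n) (B n) := rfl

lemma Mk2_norm_sq (A B : lp (fun _ : ℕ => lp (fun _ : X => ℝ) 2) 2) :
    ‖Mk2 A B‖ ^ 2 = ‖A‖ ^ 2 + ‖B‖ ^ 2 := by
  rw [aux_lp_norm_sq, aux_lp_norm_sq, aux_lp_norm_sq]
  simp only [Mk2_apply, lpMk_norm_sq]
  exact Summable.tsum_add (aux_lp_summable_sq A) (aux_lp_summable_sq B)

lemma Mk2_add (A B A' B' : lp (fun _ : ℕ => lp (fun _ : X => ℝ) 2) 2) :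
    Mk2 (A + A') (B + B') = Mk2 A B + Mk2 A' B' := by
  ext n γ
  simp only [Mk2_apply, lp.coeFn_add, Pi.add_apply, lpMk_apply]
  push_cast
  ring

lemma Mk2_smul (c : ℂ) (A B : lp (fun _ : ℕ => lp (fun _ : X => ℝ) 2) 2) :
    Mk2 (c.re • A - c.im • B) (c.im • A + c.re • B) = c • Mk2 A B := by
  ext n γ
  simp only [Mk2_apply, lp.coeFn_add, lp.coeFn_sub, lp.coeFn_smul, Pi.add_apply,
    Pi.sub_apply, Pi.smul_apply, lpMk_apply, smul_eq_mul]
  simp [Complex.ext_iff, Complex.mul_re, Complex.mul_im]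
  ring

/-- Split a sequence of complex `ℓ²` functions into real and imaginary parts,
interleaved on even and odd indices. -/
noncomputable def Split (F : lp (fun _ : ℕ => lp (fun _ : X => ℂ) 2) 2) :
    lp (fun _ : ℕ => lp (fun _ : X => ℝ) 2) 2 :=
  ⟨fun k => if k % 2 = 0 then lpRe (F (k / 2)) else lpIm (F (k / 2)), by
    refine (aux_memℓp_two_iff _).2 ?_
    refine Summable.even_add_odd ?_ ?_
    · refine ((aux_lp_summable_sq F).of_nonneg_of_le (fun k => by positivity)
        (fun k => ?_))
      simp only [show ∀ k : ℕ, 2 * k % 2 = 0 from fun k => by omega,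
        show ∀ k : ℕ, 2 * k / 2 = k from fun k => by omega, if_true]
      rw [aux_lp_norm_sq_re_im (F k)]
      have : (0:ℝ) ≤ ‖lpIm (F k)‖ ^ 2 := by positivity
      linarith
    · refine ((aux_lp_summable_sq F).of_nonneg_of_le (fun k => by positivity)
        (fun k => ?_))
      simp only [show ∀ k : ℕ, (2 * k + 1) % 2 = 1 from fun k => by omega,
        show ∀ k : ℕ, (2 * k + 1) / 2 = k from fun k => by omega]
      simp only [one_ne_zero, if_false]
      rw [aux_lp_norm_sq_re_im (F k)]
      have : (0:ℝ) ≤ ‖lpRe (F k)‖ ^ 2 := by positivity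
      linarith⟩

@[simp] lemma Split_apply (F : lp (fun _ : ℕ => lp (fun _ : X => ℂ) 2) 2) (k : ℕ) :
    (Split F : ∀ _ : ℕ, lp (fun _ : X => ℝ) 2) k =
      if k % 2 = 0 then lpRe (F (k / 2)) else lpIm (F (k / 2)) := rfl

lemma Split_summable_even (F : lp (fun _ : ℕ => lp (fun _ : X => ℂ) 2) 2) :
    Summable (fun k => ‖lpRe (F k)‖ ^ 2) := by
  refine ((aux_lp_summable_sq F).of_nonneg_of_le (fun k => by positivity) (fun k => ?_))
  rw [aux_lp_norm_sq_re_im (F k)]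
  have : (0:ℝ) ≤ ‖lpIm (F k)‖ ^ 2 := by positivity
  linarith

lemma Split_summable_odd (F : lp (fun _ : ℕ => lp (fun _ : X => ℂ) 2) 2) :
    Summable (fun k => ‖lpIm (F k)‖ ^ 2) := by
  refine ((aux_lp_summable_sq F).of_nonneg_of_le (fun k => by positivity) (fun k => ?_))
  rw [aux_lp_norm_sq_re_im (F k)]
  have : (0:ℝ) ≤ ‖lpRe (F k)‖ ^ 2 := by positivity
  linarith

lemma Split_norm_sq (F : lp (fun _ : ℕ => lp (fun _ : X => ℂ) 2) 2) :
    ‖Split F‖ ^ 2 = ‖F‖ ^ 2 := by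
  rw [aux_lp_norm_sq, aux_lp_norm_sq]
  have he : (fun k : ℕ => ‖(Split F : ∀ _ : ℕ, lp (fun _ : X => ℝ) 2) (2 * k)‖ ^ 2)
      = fun k => ‖lpRe (F k)‖ ^ 2 := by
    funext k
    simp only [Split_apply, show 2 * k % 2 = 0 by omega, show 2 * k / 2 = k by omega, if_true]
  have ho : (fun k : ℕ => ‖(Split F : ∀ _ : ℕ, lp (fun _ : X => ℝ) 2) (2 * k + 1)‖ ^ 2)
      = fun k => ‖lpIm (F k)‖ ^ 2 := by
    funext k
    simp only [Split_apply, show (2 * k + 1) % 2 = 1 by omega,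
      show (2 * k + 1) / 2 = k by omega, one_ne_zero, if_false]
  rw [← tsum_even_add_odd (by rw [he]; exact Split_summable_even F)
    (by rw [ho]; exact Split_summable_odd F), he, ho]
  rw [← Summable.tsum_add (Split_summable_even F) (Split_summable_odd F)]
  congr 1
  funext k
  exact (aux_lp_norm_sq_re_im (F k)).symm

lemma Split_add (F G : lp (fun _ : ℕ => lp (fun _ : X => ℂ) 2) 2) :
    Split (F + G) = Split F + Split G := by
  ext k γ
  by_cases hk : k % 2 = 0 <;>
    simp [Split_apply, hk, lp.coeFn_add, Pi.add_apply]

lemma Split_csmul (c : ℝ) (F : lp (fun _ : ℕ => lp (fun _ : X => ℂ) 2) 2) :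
    Split ((c : ℂ) • F) = c • Split F := by
  ext k γ
  by_cases hk : k % 2 = 0 <;>
    simp [Split_apply, hk, -Complex.coe_smul, lp.coeFn_smul, Pi.smul_apply, Complex.mul_re, Complex.mul_im]

end MkSplit

section Equivariance

variable {Γ : Type*} [Group Γ]

lemma leftTranslation_lpRe (g : Γ) (f : lp (fun _ : Γ => ℂ) 2) :
    lpRe (leftTranslation g f) = leftTranslation g (lpRe f) := by
  ext γ; rfl

lemma leftTranslation_lpIm (g : Γ) (f : lp (fun _ : Γ => ℂ) 2) :
    lpIm (leftTranslation g f) = leftTranslation g (lpIm f) := by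
  ext γ; rfl

lemma leftTranslation_lpMk (g : Γ) (a b : lp (fun _ : Γ => ℝ) 2) :
    leftTranslation g (lpMk a b) = lpMk (leftTranslation g a) (leftTranslation g b) := by
  ext γ; rfl

end Equivariance

section Decomp

open Complex

variable {H Hc : Type*}
  [NormedAddCommGroup H] [InnerProductSpace ℝ H]
  [NormedAddCommGroup Hc] [InnerProductSpace ℂ Hc]
  (ι : H →ₗᵢ[ℝ] Hc)

variable (hreal : ∀ u v : H, (inner (𝕜 := ℂ) (ι u) (ι v)) = ((inner (𝕜 := ℝ) u v : ℝ) : ℂ))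

include hreal in
lemma decomp_zero {u v : H} (h : ι u + I • ι v = 0) : u = 0 ∧ v = 0 := by
  have hu : (inner (𝕜 := ℂ) (ι u) (ι u + I • ι v)) = 0 := by rw [h, inner_zero_right]
  rw [inner_add_right, inner_smul_right, hreal, hreal] at hu
  have hre := congrArg Complex.re hu
  simp only [Complex.add_re, Complex.ofReal_re, Complex.mul_re, Complex.I_re,
    Complex.I_im, Complex.ofReal_im, Complex.zero_re] at hre
  have hu0 : (inner (𝕜 := ℝ) u u) = (0:ℝ) := by linarith
  have hu' : u = 0 := inner_self_eq_zero.mp hu0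
  refine ⟨hu', ?_⟩
  rw [hu', map_zero] at h
  simp only [zero_add, smul_eq_zero, I_ne_zero, false_or] at h
  have : ‖v‖ = 0 := by rw [← ι.norm_map v, h, norm_zero]
  exact norm_eq_zero.mp this

include hreal in
lemma decomp_unique {u v u' v' : H} (h : ι u + I • ι v = ι u' + I • ι v') :
    u = u' ∧ v = v' := by
  have h0 : ι (u - u') + I • ι (v - v') = 0 := by
    rw [map_sub, map_sub, smul_sub, sub_add_sub_comm, h, sub_self]
  obtain ⟨h1, h2⟩ := decomp_zero ι hreal h0
  exact ⟨sub_eq_zero.mp h1, sub_eq_zero.mp h2⟩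

variable (hspan : ∀ w : Hc, ∃ u v : H, w = ι u + I • ι v)

/-- The "real part" of a vector in the complexification. -/
noncomputable def reP (w : Hc) : H := (hspan w).choose

/-- The "imaginary part" of a vector in the complexification. -/
noncomputable def imP (w : Hc) : H := (hspan w).choose_spec.choose

lemma reimP_spec (w : Hc) : w = ι (reP ι hspan w) + I • ι (imP ι hspan w) :=
  (hspan w).choose_spec.choose_spec

include hreal in
lemma reP_eq {w : Hc} {u v : H} (h : w = ι u + I • ι v) :
    reP ι hspan w = u ∧ imP ι hspan w = v :=
  decomp_unique ι hreal ((reimP_spec ι hspan w).symm.trans h)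

include hreal in
lemma reP_add (w w' : Hc) :
    reP ι hspan (w + w') = reP ι hspan w + reP ι hspan w' ∧
    imP ι hspan (w + w') = imP ι hspan w + imP ι hspan w' := by
  refine reP_eq ι hreal hspan ?_
  conv_lhs => rw [reimP_spec ι hspan w, reimP_spec ι hspan w']
  rw [map_add, map_add, smul_add]
  abel

include hreal in
lemma reP_smul (c : ℂ) (w : Hc) :
    reP ι hspan (c • w) = c.re • reP ι hspan w - c.im • imP ι hspan w ∧
    imP ι hspan (c • w) = c.im • reP ι hspan w + c.re • imP ι hspan w := by
  have hc1 : c = (c.re : ℂ) + I * (c.im : ℂ) := by simp [Complex.ext_iff]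
  have hc2 : c * I = -(c.im : ℂ) + I * (c.re : ℂ) := by simp [Complex.ext_iff]
  have key : ∀ x y : Hc, c • (x + I • y) =
      ((c.re : ℂ) • x - (c.im : ℂ) • y) + I • ((c.im : ℂ) • x + (c.re : ℂ) • y) := by
    intro x y
    calc c • (x + I • y) = c • x + (c * I) • y := by rw [smul_add, smul_smul]
      _ = ((c.re : ℂ) + I * (c.im : ℂ)) • x + (-(c.im : ℂ) + I * (c.re : ℂ)) • y := by
          rw [← hc1, ← hc2]
      _ = ((c.re : ℂ) • x - (c.im : ℂ) • y) + I • ((c.im : ℂ) • x + (c.re : ℂ) • y) := by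
          rw [add_smul, add_smul, smul_add, mul_smul, mul_smul, neg_smul]
          abel
  refine reP_eq ι hreal hspan ?_
  set u := reP ι hspan w
  set v := imP ι hspan w
  conv_lhs => rw [reimP_spec ι hspan w]
  rw [map_sub, map_add, ι.map_smul, ι.map_smul, ι.map_smul, ι.map_smul]
  simp only [← Complex.coe_smul]
  exact key (ι u) (ι v)

include hreal in
lemma norm_sq_reP (w : Hc) :
    ‖w‖ ^ 2 = ‖reP ι hspan w‖ ^ 2 + ‖imP ι hspan w‖ ^ 2 := by
  set u := reP ι hspan w
  set v := imP ι hspan w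
  conv_lhs => rw [reimP_spec ι hspan w]
  rw [@norm_add_sq ℂ _ _ _ _ (ι u) (I • ι v), inner_smul_right, hreal, norm_smul]
  simp only [RCLike.re_to_complex, Complex.mul_re, Complex.I_re, Complex.I_im,
    Complex.ofReal_re, Complex.ofReal_im, Complex.norm_I,
    ι.norm_map]
  ring

end Decomp

/-- The complexification `ρ_ℂ` of an orthogonal representation `ρ` embeds into a countable
direct sum of copies of the complex left regular representation `λ_Γ` if and only if `ρ`
embeds into a countable direct sum of copies of the real left regular representation
`λ_{Γ,ℝ}`. -/
theorem complexification_absContinuous_leftRegular_iff [Countable Γ]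
    {H Hc : Type*}
    [NormedAddCommGroup H] [InnerProductSpace ℝ H] [CompleteSpace H]
    [NormedAddCommGroup Hc] [InnerProductSpace ℂ Hc] [CompleteSpace Hc]
    (ρ : Γ →* (H ≃ₗᵢ[ℝ] H)) (ι : H →ₗᵢ[ℝ] Hc)
    (hreal : ∀ u v : H, (inner (𝕜 := ℂ) (ι u) (ι v)) = ((inner (𝕜 := ℝ) u v : ℝ) : ℂ))
    (hspan : ∀ w : Hc, ∃ u v : H, w = ι u + Complex.I • ι v)
    (ρc : Γ →* (Hc ≃ₗᵢ[ℂ] Hc)) (hρc : ∀ (g : Γ) (v : H), ρc g (ι v) = ι (ρ g v)) :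
    AbsContinuousReps ℂ ρc (leftRegularRep ℂ) ↔ AbsContinuousReps ℝ ρ (leftRegularRep ℝ) := by
  constructor
  · rintro ⟨Ψ, hΨ⟩
    refine ⟨{ toFun := fun u => Split (Ψ (ι u)),
              map_add' := ?_, map_smul' := ?_, norm_map' := ?_ }, ?_⟩
    · intro u v
      show Split (Ψ (ι (u + v))) = Split (Ψ (ι u)) + Split (Ψ (ι v))
      rw [ι.map_add, Ψ.map_add, Split_add]
    · intro c u
      show Split (Ψ (ι (c • u))) = (RingHom.id ℝ) c • Split (Ψ (ι u))
      rw [ι.map_smul, RingHom.id_apply]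
      rw [show (c • ι u : Hc) = (c : ℂ) • ι u from rfl, Ψ.map_smul, Split_csmul]
    · intro u
      show ‖Split (Ψ (ι u))‖ = ‖u‖
      refine aux_norm_eq_of_sq_eq_sq (norm_nonneg _) (norm_nonneg _) ?_
      rw [Split_norm_sq, Ψ.norm_map, ι.norm_map]
    · intro g u k
      show (Split (Ψ (ι (ρ g u))) : ∀ _ : ℕ, _) k
          = leftRegularRep ℝ g ((Split (Ψ (ι u)) : ∀ _ : ℕ, _) k)
      have hg : ι (ρ g u) = ρc g (ι u) := (hρc g u).symm
      rw [hg]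
      have hco : ∀ n : ℕ, (Ψ (ρc g (ι u)) : ∀ _ : ℕ, _) n
          = leftRegularRep ℂ g ((Ψ (ι u) : ∀ _ : ℕ, _) n) := hΨ g (ι u)
      simp only [Split_apply]
      by_cases hk : k % 2 = 0
      · simp only [hk, if_true]
        rw [hco (k / 2)]
        exact leftTranslation_lpRe g _
      · simp only [hk, if_false]
        rw [hco (k / 2)]
        exact leftTranslation_lpIm g _
  · rintro ⟨Φ, hΦ⟩
    refine ⟨{ toFun := fun w => Mk2 (Φ (reP ι hspan w)) (Φ (imP ι hspan w)),
              map_add' := ?_, map_smul' := ?_, norm_map' := ?_ }, ?_⟩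
    · intro w w'
      show Mk2 (Φ (reP ι hspan (w + w'))) (Φ (imP ι hspan (w + w')))
          = Mk2 (Φ (reP ι hspan w)) (Φ (imP ι hspan w))
            + Mk2 (Φ (reP ι hspan w')) (Φ (imP ι hspan w'))
      obtain ⟨h1, h2⟩ := reP_add ι hreal hspan w w'
      rw [h1, h2, Φ.map_add, Φ.map_add, Mk2_add]
    · intro c w
      show Mk2 (Φ (reP ι hspan (c • w))) (Φ (imP ι hspan (c • w)))
          = (RingHom.id ℂ) c • Mk2 (Φ (reP ι hspan w)) (Φ (imP ι hspan w))
      rw [RingHom.id_apply]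
      obtain ⟨h1, h2⟩ := reP_smul ι hreal hspan c w
      rw [h1, h2, Φ.map_sub, Φ.map_smul, Φ.map_smul, Φ.map_add, Φ.map_smul, Φ.map_smul,
        Mk2_smul]
    · intro w
      show ‖Mk2 (Φ (reP ι hspan w)) (Φ (imP ι hspan w))‖ = ‖w‖
      refine aux_norm_eq_of_sq_eq_sq (norm_nonneg _) (norm_nonneg _) ?_
      rw [Mk2_norm_sq, Φ.norm_map, Φ.norm_map, norm_sq_reP ι hreal hspan w]
    · intro g w n
      have hrw : reP ι hspan (ρc g w) = ρ g (reP ι hspan w) ∧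
          imP ι hspan (ρc g w) = ρ g (imP ι hspan w) := by
        refine reP_eq ι hreal hspan ?_
        conv_lhs => rw [reimP_spec ι hspan w]
        rw [map_add, LinearIsometryEquiv.map_smul, hρc, hρc]
      obtain ⟨h1, h2⟩ := hrw
      show (Mk2 (Φ (reP ι hspan (ρc g w))) (Φ (imP ι hspan (ρc g w))) : ∀ _ : ℕ, _) n
          = leftRegularRep ℂ g ((Mk2 (Φ (reP ι hspan w)) (Φ (imP ι hspan w)) : ∀ _ : ℕ, _) n)
      rw [h1, h2]
      simp only [Mk2_apply]
      rw [hΦ g (reP ι hspan w) n, hΦ g (imP ι hspan w) n]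
      exact (leftTranslation_lpMk g _ _).symm

end
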